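/- arXiv:0805.1270 — 5 statements merged into one kernel-verified Lean document; each statement's English description precedes it below -/
import Mathlib

section
/- Let k ≥ 2 and let (i_1, ..., i_{k-1}) ∈ {0,1}^{k-1}. Suppose n_1, ..., n_k are positive integers such that √n_1 + (-1)^{i_1}√n_2 + ... + (-1)^{i_{k-1}}√n_k ≠ 0. Then |√n_1 + (-1)^{i_1}√n_2 + ... + (-1)^{i_{k-1}}√n_k| ≥ c · max(n_1,...,n_k)^{-(2^{k-2} - 1/2)} for some constant c > 0 depending only on k. -/
noncomputable def sqf : List ℕ → ℝ → ℝ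
  | [], x => x
  | (n :: l), x => sqf l (x + Real.sqrt n) * sqf l (x - Real.sqrt n)

lemma sqf_neg (l : List ℕ) (x : ℝ) : sqf l (-x) = (-1) ^ (2 ^ l.length) * sqf l x := by
  induction l generalizing x with
  | nil => simp [sqf]
  | cons n l ih =>
    have h1 : -x + Real.sqrt n = -(x - Real.sqrt n) := by ring
    have h2 : -x - Real.sqrt n = -(x + Real.sqrt n) := by ring
    simp only [sqf, h1, h2, ih, List.length_cons]
    rw [pow_succ, pow_mul]
    ring

lemma sqf_bound (l : List ℕ) (x B : ℝ) (hB : 0 ≤ B)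
    (h : |x| + (l.map fun n : ℕ => Real.sqrt n).sum ≤ B) :
    |sqf l x| ≤ B ^ (2 ^ l.length) := by
  induction l generalizing x with
  | nil => simpa [sqf] using h
  | cons n l ih =>
    have hs : (0:ℝ) ≤ Real.sqrt n := Real.sqrt_nonneg _
    have hsum : (0:ℝ) ≤ (l.map fun n : ℕ => Real.sqrt n).sum :=
      List.sum_nonneg (by rintro a ha; simp only [List.mem_map] at ha; obtain ⟨b, _, rfl⟩ := ha; exact Real.sqrt_nonneg _)
    have h' : |x| + Real.sqrt n + (l.map fun n : ℕ => Real.sqrt n).sum ≤ B := by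
      simpa [add_assoc] using h
    have h1 : |x + Real.sqrt n| + (l.map fun n : ℕ => Real.sqrt n).sum ≤ B := by
      have := abs_add_le x (Real.sqrt n)
      rw [abs_of_nonneg hs] at this
      linarith
    have h2 : |x - Real.sqrt n| + (l.map fun n : ℕ => Real.sqrt n).sum ≤ B := by
      have := abs_sub x (Real.sqrt n)
      rw [abs_of_nonneg hs] at this
      linarith
    calc |sqf (n :: l) x| = |sqf l (x + Real.sqrt n)| * |sqf l (x - Real.sqrt n)| := by
          simp [sqf, abs_mul]
      _ ≤ B ^ (2 ^ l.length) * B ^ (2 ^ l.length) :=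
          mul_le_mul (ih _ h1) (ih _ h2) (abs_nonneg _) (pow_nonneg hB _)
      _ = B ^ (2 ^ (n :: l).length) := by rw [← pow_add]; congr 1; simp [List.length_cons]; ring

lemma sqf_factor (L : List (ℝ × ℕ)) (x B : ℝ)
    (hs : ∀ p ∈ L, p.1 = 1 ∨ p.1 = -1)
    (hb : |x| + (L.map fun p => Real.sqrt p.2).sum ≤ B) :
    ∃ R : ℝ, sqf (L.map Prod.snd) x = (x + (L.map fun p => p.1 * Real.sqrt p.2).sum) * R ∧
      |R| ≤ B ^ (2 ^ L.length - 1) := by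
  have hB : 0 ≤ B := by
    have h0 : (0:ℝ) ≤ |x| + (L.map fun p => Real.sqrt p.2).sum := by
      have : (0:ℝ) ≤ (L.map fun p => Real.sqrt p.2).sum :=
        List.sum_nonneg (by rintro a ha; simp only [List.mem_map] at ha; obtain ⟨b, _, rfl⟩ := ha; exact Real.sqrt_nonneg _)
      positivity
    linarith
  induction L generalizing x with
  | nil => exact ⟨1, by simp [sqf]⟩
  | cons p L ih =>
    obtain ⟨σ, n⟩ := p
    have hσ : σ = 1 ∨ σ = -1 := hs _ List.mem_cons_self
    have hs' : ∀ q ∈ L, q.1 = 1 ∨ q.1 = -1 := fun q hq => hs q (List.mem_cons_of_mem _ hq)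
    have hsn : (0:ℝ) ≤ Real.sqrt n := Real.sqrt_nonneg _
    have hb' : |x| + Real.sqrt n + (L.map fun p => Real.sqrt p.2).sum ≤ B := by
      simpa [add_assoc] using hb
    have hb1 : |x + Real.sqrt n| + (L.map fun p => Real.sqrt p.2).sum ≤ B := by
      have := abs_add_le x (Real.sqrt n); rw [abs_of_nonneg hsn] at this; linarith
    have hb2 : |x - Real.sqrt n| + (L.map fun p => Real.sqrt p.2).sum ≤ B := by
      have := abs_sub x (Real.sqrt n); rw [abs_of_nonneg hsn] at this; linarith
    have hlen : 2 ^ L.length - 1 + 2 ^ L.length = 2 ^ (L.length + 1) - 1 := by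
      have : 1 ≤ 2 ^ L.length := Nat.one_le_two_pow
      omega
    have hmm : (List.map (fun n : ℕ => Real.sqrt n) (L.map Prod.snd)) = L.map (fun p => Real.sqrt p.2) := by
      rw [List.map_map]; rfl
    rcases hσ with h1 | h1
    · obtain ⟨R, hR, hRb⟩ := ih (x + Real.sqrt n) hs' hb1
      refine ⟨R * sqf (L.map Prod.snd) (x - Real.sqrt n), ?_, ?_⟩
      · simp only [sqf, List.map_cons, List.length_cons, List.sum_cons, h1, one_mul]
        rw [hR]; ring
      · rw [abs_mul]
        calc |R| * |sqf (L.map Prod.snd) (x - Real.sqrt n)|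
            ≤ B ^ (2 ^ L.length - 1) * B ^ (2 ^ (L.map Prod.snd).length) :=
              mul_le_mul hRb (sqf_bound _ _ _ hB (by rw [hmm]; exact hb2))
                (abs_nonneg _) (pow_nonneg hB _)
        _ = B ^ (2 ^ (L.length + 1) - 1) := by
              rw [← pow_add, List.length_map, hlen]
    · obtain ⟨R, hR, hRb⟩ := ih (x - Real.sqrt n) hs' hb2
      refine ⟨sqf (L.map Prod.snd) (x + Real.sqrt n) * R, ?_, ?_⟩
      · simp only [sqf, List.map_cons, List.length_cons, List.sum_cons, h1]
        rw [hR]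
        ring
      · rw [abs_mul]
        calc |sqf (L.map Prod.snd) (x + Real.sqrt n)| * |R|
            ≤ B ^ (2 ^ (L.map Prod.snd).length) * B ^ (2 ^ L.length - 1) :=
              mul_le_mul (sqf_bound _ _ _ hB (by rw [hmm]; exact hb1)) hRb
                (abs_nonneg _) (pow_nonneg hB _)
        _ = B ^ (2 ^ (L.length + 1) - 1) := by
              rw [← pow_add, List.length_map, Nat.add_comm, hlen]

lemma sqf_zero (l : List ℕ) (x : ℝ) (h : sqf l x = 0) :
    ∃ t : List ℝ, t.length = l.length ∧ (∀ σ ∈ t, σ = 1 ∨ σ = -1) ∧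
      x + ((t.zip l).map fun p => p.1 * Real.sqrt p.2).sum = 0 := by
  induction l generalizing x with
  | nil => exact ⟨[], by simp, by simp, by simpa [sqf] using h⟩
  | cons n l ih =>
    simp only [sqf, mul_eq_zero] at h
    rcases h with h | h
    · obtain ⟨t, ht1, ht2, ht3⟩ := ih _ h
      refine ⟨1 :: t, by simp [ht1], ?_, ?_⟩
      · rintro σ hσ; rcases List.mem_cons.1 hσ with rfl | hσ; · left; rfl
        · exact ht2 _ hσ
      · simp only [List.zip_cons_cons, List.map_cons, List.sum_cons, one_mul]
        linarith
    · obtain ⟨t, ht1, ht2, ht3⟩ := ih _ h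
      refine ⟨(-1) :: t, by simp [ht1], ?_, ?_⟩
      · rintro σ hσ; rcases List.mem_cons.1 hσ with rfl | hσ; · right; rfl
        · exact ht2 _ hσ
      · simp only [List.zip_cons_cons, List.map_cons, List.sum_cons, neg_one_mul]
        linarith

open Polynomial in
lemma conjpair (n : ℕ) (p : Polynomial ℤ) : ∃ a b : Polynomial ℤ, ∀ x : ℝ,
    aeval (x + Real.sqrt n) p = aeval x a + Real.sqrt n * aeval x b ∧
    aeval (x - Real.sqrt n) p = aeval x a - Real.sqrt n * aeval x b := by
  have hn : (Real.sqrt n) ^ 2 = (n:ℝ) := Real.sq_sqrt (Nat.cast_nonneg n)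
  induction p using Polynomial.induction_on with
  | C c => exact ⟨C c, 0, fun x => by simp⟩
  | add p q hp hq =>
    obtain ⟨a1, b1, h1⟩ := hp
    obtain ⟨a2, b2, h2⟩ := hq
    exact ⟨a1 + a2, b1 + b2, fun x => by
      obtain ⟨e1, e2⟩ := h1 x; obtain ⟨f1, f2⟩ := h2 x
      constructor <;> simp [e1, e2, f1, f2] <;> ring⟩
  | monomial m c hm =>
    obtain ⟨a, b, h⟩ := hm
    refine ⟨X * a + C (n:ℤ) * b, a + X * b, fun x => ?_⟩
    obtain ⟨e1, e2⟩ := h x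
    have key1 : (aeval (x + Real.sqrt n)) (C c * X ^ (m + 1))
        = (aeval (x + Real.sqrt n)) (C c * X ^ m) * (x + Real.sqrt n) := by
      simp [pow_succ]; ring
    have key2 : (aeval (x - Real.sqrt n)) (C c * X ^ (m + 1))
        = (aeval (x - Real.sqrt n)) (C c * X ^ m) * (x - Real.sqrt n) := by
      simp [pow_succ]; ring
    constructor
    · rw [key1, e1]
      simp only [map_add, map_mul, aeval_X, aeval_C, algebraMap_int_eq, eq_intCast, map_intCast, map_natCast, Int.cast_natCast]
      linear_combination ((aeval x) b) * hn
    · rw [key2, e2]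
      simp only [map_add, map_mul, aeval_X, aeval_C, algebraMap_int_eq, eq_intCast, map_intCast, map_natCast, Int.cast_natCast]
      linear_combination ((aeval x) b) * hn

open Polynomial in
lemma sqf_poly (l : List ℕ) : ∃ q : Polynomial ℤ, ∀ x : ℝ, sqf l x = aeval x q := by
  induction l with
  | nil => exact ⟨X, fun x => by simp [sqf]⟩
  | cons n l ih =>
    obtain ⟨q, hq⟩ := ih
    obtain ⟨a, b, hab⟩ := conjpair n q
    refine ⟨a ^ 2 - C (n:ℤ) * b ^ 2, fun x => ?_⟩
    obtain ⟨e1, e2⟩ := hab x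
    have hn : (Real.sqrt n) ^ 2 = (n:ℝ) := Real.sq_sqrt (Nat.cast_nonneg n)
    simp only [sqf, hq, e1, e2, map_sub, map_mul, map_pow, aeval_C]
    push_cast
    linear_combination (-(Polynomial.aeval x b)^2) * hn

lemma sqf_int (l : List ℕ) : ∃ z : ℤ, sqf l 0 = (z : ℝ) := by
  obtain ⟨q, hq⟩ := sqf_poly l
  exact ⟨q.eval 0, by rw [hq 0]; simp [Polynomial.aeval_def, Polynomial.eval₂_at_zero, Polynomial.coeff_zero_eq_eval_zero]⟩


lemma sum_zip_split (t : List ℝ) : ∀ (L : List (ℝ × ℕ)), t.length = L.length →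
    (((t.zip L).map fun q => ((q.2.1 - q.1)/2) * Real.sqrt q.2.2).sum)
    = ((L.map fun p => p.1 * Real.sqrt p.2).sum
       - ((t.zip (L.map Prod.snd)).map fun p => p.1 * Real.sqrt p.2).sum)/2 := by
  induction t with
  | nil =>
    intro L h
    rw [List.length_nil] at h
    rw [List.eq_nil_of_length_eq_zero h.symm]
    simp
  | cons τ t ih =>
    rintro (_ | ⟨p, L⟩) h
    · simp at h
    · simp only [List.length_cons, Nat.succ_inj] at h
      simp only [List.map_cons, List.zip_cons_cons, List.sum_cons, ih L h]
      ring

lemma bmono (N : ℕ) (hN : 1 ≤ N) {j m : ℕ} (hm : 1 ≤ m) (h : j ≤ m) :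
    ((j:ℝ) * Real.sqrt N) ^ (2 ^ (j-1) - 1) ≤ ((m:ℝ) * Real.sqrt N) ^ (2 ^ (m-1) - 1) := by
  have hsq : (1:ℝ) ≤ Real.sqrt N := Real.one_le_sqrt.mpr (by exact_mod_cast hN)
  have h1 : (1:ℝ) ≤ (m:ℝ) * Real.sqrt N := by
    have : (1:ℝ) ≤ (m:ℝ) := by exact_mod_cast hm
    nlinarith
  calc ((j:ℝ) * Real.sqrt N) ^ (2 ^ (j-1) - 1)
      ≤ ((m:ℝ) * Real.sqrt N) ^ (2 ^ (j-1) - 1) := by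
        apply pow_le_pow_left₀ (by positivity)
        have : (j:ℝ) ≤ (m:ℝ) := by exact_mod_cast h
        nlinarith [Real.sqrt_nonneg (N:ℝ)]
    _ ≤ ((m:ℝ) * Real.sqrt N) ^ (2 ^ (m-1) - 1) := by
        apply pow_le_pow_right₀ h1
        have : 2 ^ (j-1) ≤ 2 ^ (m-1) := Nat.pow_le_pow_right (by norm_num) (by omega)
        omega

lemma sqrt_le_of_le (a N : ℕ) (h : a ≤ N) : Real.sqrt a ≤ Real.sqrt N :=
  Real.sqrt_le_sqrt (by exact_mod_cast h)

lemma core : ∀ (m : ℕ) (L : List (ℝ × ℕ)), L.length = m → ∀ N : ℕ, 1 ≤ N →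
    (∀ p ∈ L, p.1 = 1 ∨ p.1 = -1 ∨ p.1 = 0) →
    (∀ p ∈ L, 0 < p.2 ∧ p.2 ≤ N) →
    (L.map fun p => p.1 * Real.sqrt p.2).sum ≠ 0 →
    1 ≤ |(L.map fun p => p.1 * Real.sqrt p.2).sum| * (((m:ℝ) * Real.sqrt N) ^ (2 ^ (m-1) - 1)) := by
  intro m
  induction m using Nat.strong_induction_on with
  | _ m IH =>
  intro L hlen N hN hsign hbound hne
  by_cases h0 : ∃ p ∈ L, p.1 = 0
  -- Case: some coefficient is zero; drop it
  · obtain ⟨p, hpL, hp0⟩ := h0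
    obtain ⟨L₁, L₂, rfl⟩ := List.append_of_mem hpL
    have hm1 : 1 ≤ m := by
      rw [← hlen]; simp [List.length_append]; omega
    set L' := L₁ ++ L₂ with hL'
    have hlen' : L'.length = m - 1 := by
      simp only [List.length_append, List.length_cons] at hlen ⊢
      simp [hL', List.length_append]; omega
    have hsum : (L'.map fun p => p.1 * Real.sqrt p.2).sum
        = ((L₁ ++ p :: L₂).map fun p => p.1 * Real.sqrt p.2).sum := by
      simp [hL', List.map_append, List.sum_append, hp0]
    have hmem : ∀ q ∈ L', q ∈ L₁ ++ p :: L₂ := by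
      intro q hq
      rcases List.mem_append.1 hq with h | h
      · exact List.mem_append.2 (Or.inl h)
      · exact List.mem_append.2 (Or.inr (List.mem_cons_of_mem _ h))
    have key := IH (m-1) (by omega) L' hlen' N hN
      (fun q hq => hsign q (hmem q hq)) (fun q hq => hbound q (hmem q hq))
      (by rw [hsum]; exact hne)
    rw [hsum] at key
    exact le_trans key (mul_le_mul_of_nonneg_left (bmono N hN hm1 (Nat.sub_le m 1)) (abs_nonneg _))
  -- all coefficients are ±1
  · push_neg at h0
    have hsign' : ∀ p ∈ L, p.1 = 1 ∨ p.1 = -1 := by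
      intro p hp
      rcases hsign p hp with h | h | h
      · exact Or.inl h
      · exact Or.inr h
      · exact absurd h (h0 p hp)
    match L, hlen with
    | [], hlen =>
      exact absurd (by simp) hne
    | p₀ :: L', hlen =>
      have hL'len : L'.length = m - 1 := by
        rw [List.length_cons] at hlen; omega
      have hm1 : 1 ≤ m := by rw [← hlen]; simp
      by_cases hm2' : m = 1
      -- single term
      · have hL'nil : L' = [] := List.eq_nil_of_length_eq_zero (by omega)
        subst hL'nil
        have hp := hsign' p₀ (by simp)
        have hb := hbound p₀ (by simp)
        have h1 : (1:ℝ) ≤ Real.sqrt p₀.2 := Real.one_le_sqrt.mpr (by exact_mod_cast hb.1)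
        have habs : |p₀.1 * Real.sqrt p₀.2| = Real.sqrt p₀.2 := by
          rcases hp with h | h <;> rw [h] <;> simp [abs_of_nonneg (Real.sqrt_nonneg _)]
        simp only [List.map_cons, List.map_nil, List.sum_cons, List.sum_nil, add_zero]
        rw [habs, hm2']
        norm_num
        linarith
      · have hm2 : 2 ≤ m := by omega
        set σ := p₀.1 with hσdef
        have hσ : σ = 1 ∨ σ = -1 := hsign' p₀ (by simp)
        have hσ2 : σ * σ = 1 := by rcases hσ with h | h <;> rw [h] <;> norm_num
        have hσabs : |σ| = 1 := by rcases hσ with h | h <;> rw [h] <;> norm_num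
        set L'' := L'.map (fun q => (σ * q.1, q.2)) with hL''
        have hL''len : L''.length = m - 1 := by rw [hL'', List.length_map]; exact hL'len
        have hL''sign : ∀ q ∈ L'', q.1 = 1 ∨ q.1 = -1 := by
          intro q hq
          rw [hL''] at hq
          obtain ⟨r, hr, rfl⟩ := List.mem_map.1 hq
          have := hsign' r (List.mem_cons_of_mem _ hr)
          rcases hσ with h | h <;> rcases this with h' | h' <;>
            simp [h, h']
        have hL''bound : ∀ q ∈ L'', 0 < q.2 ∧ q.2 ≤ N := by
          intro q hq
          rw [hL''] at hq
          obtain ⟨r, hr, rfl⟩ := List.mem_map.1 hq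
          exact hbound r (List.mem_cons_of_mem _ hr)
        set l := L'.map Prod.snd with hl
        have hL''snd : L''.map Prod.snd = l := by
          rw [hL'', List.map_map]; rfl
        have hllen : l.length = m - 1 := by rw [hl, List.length_map]; exact hL'len
        set SL := ((p₀ :: L').map fun p => p.1 * Real.sqrt p.2).sum with hSL
        set S' := Real.sqrt p₀.2 + (L''.map fun p => p.1 * Real.sqrt p.2).sum with hS'def
        have hmapL'' : (L''.map fun p => p.1 * Real.sqrt p.2)
            = L'.map fun q => σ * (q.1 * Real.sqrt q.2) := by
          rw [hL'', List.map_map]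
          apply List.map_congr_left
          intro q hq
          simp [Function.comp, mul_assoc]
        have hS'SL : S' = σ * SL := by
          rw [hS'def, hSL, hmapL'', List.sum_map_mul_left, List.map_cons, List.sum_cons,
            mul_add, ← mul_assoc, ← hσdef, hσ2, one_mul]
        have hS'abs : |S'| = |SL| := by rw [hS'SL, abs_mul, hσabs, one_mul]
        have hS'ne : S' ≠ 0 := by
          rw [hS'SL]
          intro h
          rcases mul_eq_zero.1 h with h | h
          · rcases hσ with h' | h' <;> rw [h'] at h <;> norm_num at h
          · exact hne h
        have hb' : 1 ≤ m - 1 := by omega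
        by_cases hP : sqf l (Real.sqrt p₀.2) = 0
        -- Case B: a conjugate vanishes; reduce to fewer terms
        · obtain ⟨t, htlen, htsign, htzero⟩ := sqf_zero l _ hP
          have htlen' : t.length = L''.length := by rw [htlen, hllen, hL''len]
          set L₃ := (t.zip L'').map (fun q => ((q.2.1 - q.1)/2, q.2.2)) with hL₃
          have hL₃len : L₃.length = m - 1 := by
            rw [hL₃, List.length_map, List.length_zip, htlen', hL''len, min_self]
          have hT : (L₃.map fun p => p.1 * Real.sqrt p.2).sum = S' / 2 := by
            have h1 : (L₃.map fun p => p.1 * Real.sqrt p.2)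
                = (t.zip L'').map fun q => ((q.2.1 - q.1)/2) * Real.sqrt q.2.2 := by
              rw [hL₃, List.map_map]; rfl
            rw [h1, sum_zip_split t L'' htlen', hL''snd]
            have h2 : ((t.zip l).map fun p => p.1 * Real.sqrt p.2).sum = -Real.sqrt p₀.2 := by
              linarith [htzero]
            rw [h2, hS'def]
            ring
          have hL₃sign : ∀ q ∈ L₃, q.1 = 1 ∨ q.1 = -1 ∨ q.1 = 0 := by
            intro q hq
            rw [hL₃] at hq
            obtain ⟨r, hr, rfl⟩ := List.mem_map.1 hq
            obtain ⟨hr1, hr2⟩ := List.of_mem_zip hr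
            rcases htsign r.1 hr1 with h | h <;> rcases hL''sign r.2 hr2 with h' | h' <;>
              simp [h, h'] <;> norm_num
          have hL₃bound : ∀ q ∈ L₃, 0 < q.2 ∧ q.2 ≤ N := by
            intro q hq
            rw [hL₃] at hq
            obtain ⟨r, hr, rfl⟩ := List.mem_map.1 hq
            obtain ⟨hr1, hr2⟩ := List.of_mem_zip hr
            exact hL''bound r.2 hr2
          have hTne : (L₃.map fun p => p.1 * Real.sqrt p.2).sum ≠ 0 := by
            rw [hT]
            intro h
            exact hS'ne (by linarith)
          have key := IH (m-1) (by omega) L₃ hL₃len N hN hL₃sign hL₃bound hTne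
          rw [hT] at key
          have hbm : ((↑(m-1):ℝ) * Real.sqrt N) ^ (2 ^ (m-1-1) - 1)
              ≤ ((m:ℝ) * Real.sqrt N) ^ (2 ^ (m-1) - 1) := bmono N hN (by omega) (Nat.sub_le m 1)
          have hbnn : (0:ℝ) ≤ ((↑(m-1):ℝ) * Real.sqrt N) ^ (2 ^ (m-1-1) - 1) := by positivity
          have habs2 : |S' / 2| = |S'| / 2 := by rw [abs_div]; norm_num
          rw [habs2, hS'abs] at key
          have hSLnn : (0:ℝ) ≤ |SL| := abs_nonneg _
          nlinarith [key, hbm, hbnn, hSLnn]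
        -- Case A: product of conjugates is a nonzero integer
        · have hmain := sqf_factor L'' (Real.sqrt p₀.2) ((m:ℝ) * Real.sqrt N) hL''sign ?_
          swap
          · have h1 : |Real.sqrt p₀.2| ≤ Real.sqrt N := by
              rw [abs_of_nonneg (Real.sqrt_nonneg _)]
              exact sqrt_le_of_le _ _ (hbound p₀ (by simp)).2
            have h2 : ((L''.map fun p => Real.sqrt p.2)).sum ≤ (↑(m-1):ℝ) * Real.sqrt N := by
              have := List.sum_le_card_nsmul (L''.map fun p => Real.sqrt p.2) (Real.sqrt N) ?_
              · rw [List.length_map, hL''len] at this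
                simpa [nsmul_eq_mul] using this
              · intro x hx
                obtain ⟨q, hq, rfl⟩ := List.mem_map.1 hx
                exact sqrt_le_of_le _ _ (hL''bound q hq).2
            have hcast : (↑(m-1):ℝ) = (m:ℝ) - 1 := by
              have : 1 ≤ m := by omega
              push_cast [Nat.cast_sub this]
              ring
            rw [hcast] at h2
            nlinarith [Real.sqrt_nonneg (N:ℝ), h1, h2]
          obtain ⟨R, hfac, hRb⟩ := hmain
          rw [hL''snd] at hfac
          rw [hL''len] at hRb
          -- integrality
          have hlne : l.length ≠ 0 := by rw [hllen]; omega
          have heven : Even (2 ^ l.length) := (Nat.even_pow).mpr ⟨even_two, hlne⟩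
          obtain ⟨z, hz⟩ := sqf_int (p₀.2 :: l)
          have hsq : sqf l (Real.sqrt p₀.2) ^ 2 = (z : ℝ) := by
            rw [← hz]
            show _ = sqf (p₀.2 :: l) 0
            rw [sqf]
            rw [zero_add, zero_sub, sqf_neg, Even.neg_one_pow heven, one_mul]
            ring
          have hzne : z ≠ 0 := by
            intro h
            rw [h] at hsq
            simp at hsq
            exact hP hsq
          have hznonneg : (0:ℝ) ≤ (z:ℝ) := by rw [← hsq]; positivity
          have hz1 : (1:ℝ) ≤ (z:ℝ) := by
            have h0' : 0 ≤ z := by exact_mod_cast hznonneg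
            have h1 : 1 ≤ z := by omega
            exact_mod_cast h1
          have hPabs : 1 ≤ |sqf l (Real.sqrt p₀.2)| := by
            nlinarith [abs_nonneg (sqf l (Real.sqrt p₀.2)), sq_abs (sqf l (Real.sqrt p₀.2)), hsq]
          rw [hfac] at hPabs
          rw [abs_mul] at hPabs
          rw [← hS'def] at hPabs
          calc (1:ℝ) ≤ |S'| * |R| := hPabs
            _ ≤ |S'| * (((m:ℝ) * Real.sqrt N) ^ (2 ^ (m-1) - 1)) :=
                mul_le_mul_of_nonneg_left hRb (abs_nonneg _)
            _ = |SL| * (((m:ℝ) * Real.sqrt N) ^ (2 ^ (m-1) - 1)) := by rw [hS'abs]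


theorem signed_sqrt_sum_lower_bound (k : ℕ) (hk : 2 ≤ k) :
    ∃ c > (0:ℝ), ∀ i : Fin k → ℕ, i ⟨0, by omega⟩ = 0 → (∀ j, i j ≤ 1) →
      ∀ n : Fin k → ℕ, (∀ j, 0 < n j) →
      (∑ j, (-1 : ℝ) ^ (i j) * Real.sqrt (n j)) ≠ 0 →
      c * ((Finset.univ.sup n : ℕ) : ℝ) ^ (-((2:ℝ) ^ (k - 2) - 1/2)) ≤
        |∑ j, (-1 : ℝ) ^ (i j) * Real.sqrt (n j)| := by
  set E : ℕ := 2 ^ (k-1) - 1 with hE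
  refine ⟨((k:ℝ) ^ E)⁻¹, by positivity, ?_⟩
  intro i _ hile n hpos hne
  set N : ℕ := Finset.univ.sup n with hNdef
  have hN : 1 ≤ N := le_trans (hpos ⟨0, by omega⟩) (Finset.le_sup (Finset.mem_univ _))
  set L : List (ℝ × ℕ) := (List.finRange k).map (fun j => ((-1:ℝ)^(i j), n j)) with hL
  have hlen : L.length = k := by rw [hL, List.length_map, List.length_finRange]
  have hsum : (∑ j, (-1 : ℝ) ^ (i j) * Real.sqrt (n j))
      = (L.map fun p => p.1 * Real.sqrt p.2).sum := by
    rw [Fin.sum_univ_def, hL, List.map_map]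
    rfl
  have hsign : ∀ p ∈ L, p.1 = 1 ∨ p.1 = -1 ∨ p.1 = 0 := by
    intro p hp
    rw [hL] at hp
    obtain ⟨j, _, rfl⟩ := List.mem_map.1 hp
    rcases Nat.le_one_iff_eq_zero_or_eq_one.1 (hile j) with h | h <;> simp [h]
  have hbound : ∀ p ∈ L, 0 < p.2 ∧ p.2 ≤ N := by
    intro p hp
    rw [hL] at hp
    obtain ⟨j, _, rfl⟩ := List.mem_map.1 hp
    exact ⟨hpos j, Finset.le_sup (Finset.mem_univ j)⟩
  have key := core k L hlen N hN hsign hbound (by rw [← hsum]; exact hne)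
  rw [← hsum] at key
  set S := ∑ j, (-1 : ℝ) ^ (i j) * Real.sqrt (n j) with hS
  have hNpos : (0:ℝ) < (N:ℝ) := by exact_mod_cast hN
  have hsN : (0:ℝ) < Real.sqrt N := Real.sqrt_pos.mpr hNpos
  have hk0 : (0:ℝ) < (k:ℝ) := by
    have : 0 < k := by omega
    exact_mod_cast this
  have hbpos : (0:ℝ) < ((k:ℝ) * Real.sqrt N) ^ E := by positivity
  have h2 : (((k:ℝ) * Real.sqrt N) ^ E)⁻¹ ≤ |S| := by
    have h3 := mul_le_mul_of_nonneg_right key (inv_nonneg.mpr hbpos.le)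
    rwa [one_mul, mul_assoc, mul_inv_cancel₀ hbpos.ne', mul_one] at h3
  have e1 : Real.sqrt N = (N:ℝ) ^ ((1:ℝ)/2) := Real.sqrt_eq_rpow _
  have e2 : ((N:ℝ) ^ ((1:ℝ)/2)) ^ (E:ℕ) = (N:ℝ) ^ (((1:ℝ)/2) * (E:ℝ)) := by
    rw [← Real.rpow_natCast ((N:ℝ) ^ ((1:ℝ)/2)) E, ← Real.rpow_mul hNpos.le]
  have e3 : ((1:ℝ)/2) * (E:ℝ) = (2:ℝ)^(k-2) - 1/2 := by
    have h1 : (2:ℕ)^(k-1) = 2 * 2^(k-2) := by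
      rw [show k-1 = (k-2)+1 from by omega, pow_succ]; ring
    have h2' : 1 ≤ (2:ℕ)^(k-1) := Nat.one_le_two_pow
    have hEc : (E:ℝ) = 2 * (2:ℝ)^(k-2) - 1 := by
      rw [hE, h1]
      have h3' : 1 ≤ 2 * 2^(k-2) := by have := Nat.one_le_two_pow (n := k-2); omega
      push_cast [Nat.cast_sub h3']
      ring
    rw [hEc]; ring
  have e4 : (Real.sqrt N) ^ E = (N:ℝ) ^ ((2:ℝ)^(k-2) - 1/2) := by
    rw [e1, e2, e3]
  have heq : ((k:ℝ) ^ E)⁻¹ * ((N:ℕ):ℝ) ^ (-((2:ℝ) ^ (k - 2) - 1/2))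
      = (((k:ℝ) * Real.sqrt N) ^ E)⁻¹ := by
    rw [Real.rpow_neg hNpos.le, mul_pow, mul_inv, e4]
  rw [heq]
  exact h2
end

section
/- Let 1 ≤ l < k be integers and let n_1, ..., n_k be positive integers satisfying √n_1 + ... + √n_l = √n_{l+1} + ... + √n_k. Then n_1 + n_2 + ... + n_k is even. -/
open Polynomial IntermediateField

lemma sqfree_eq_of_isSquare {a b : ℕ} (ha : Squarefree a) (hb : Squarefree b)
    (h : IsSquare (a * b)) : a = b := by
  obtain ⟨c, hc⟩ := h
  have ha0 : a ≠ 0 := ha.ne_zero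
  have hb0 : b ≠ 0 := hb.ne_zero
  have hc0 : c ≠ 0 := by rintro rfl; simp at hc; tauto
  apply Nat.eq_of_factorization_eq ha0 hb0
  intro p
  have h1 : a.factorization p ≤ 1 := ((Nat.squarefree_iff_factorization_le_one ha0).1 ha) p
  have h2 : b.factorization p ≤ 1 := ((Nat.squarefree_iff_factorization_le_one hb0).1 hb) p
  have h3 : a.factorization p + b.factorization p = c.factorization p + c.factorization p := by
    have := congrArg Nat.factorization hc
    rw [Nat.factorization_mul ha0 hb0, Nat.factorization_mul hc0 hc0] at this
    simpa using DFunLike.congr_fun this p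
  omega

lemma isIntegral_sqrt_nat (N : ℕ) : IsIntegral ℚ (Real.sqrt N) := by
  refine ⟨X ^ 2 - C (N : ℚ), monic_X_pow_sub_C _ two_ne_zero, ?_⟩
  simp [Real.sq_sqrt (Nat.cast_nonneg N)]

lemma trace_eq_zero_of_sq {K L : Type*} [Field K] [Field L] [Algebra K L]
    [FiniteDimensional K L]
    {α : L} {q : K} (hsq : α ^ 2 = algebraMap K L q)
    (hirr : α ∉ Set.range (algebraMap K L)) :
    Algebra.trace K L α = 0 := by
  have hint : IsIntegral K α := IsIntegral.of_finite K α
  set p : K[X] := X ^ 2 - C q with hp_def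
  have hp : p.Monic := monic_X_pow_sub_C _ two_ne_zero
  have hdeg : p.natDegree = 2 := by
    simpa [hp_def] using natDegree_X_pow_sub_C (n := 2) (a := q)
  have hroot : Polynomial.aeval α p = 0 := by simp [hp_def, hsq]
  have hdvd := minpoly.dvd K α hroot
  have hle : (minpoly K α).natDegree ≤ 2 :=
    hdeg ▸ Polynomial.natDegree_le_of_dvd hdvd hp.ne_zero
  have h2 : 2 ≤ (minpoly K α).natDegree := by
    rw [minpoly.two_le_natDegree_iff hint]
    simpa [RingHom.mem_range] using hirr
  have hmin : minpoly K α = p :=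
    (Polynomial.eq_of_monic_of_dvd_of_natDegree_le (minpoly.monic hint) hp hdvd (by omega)).symm
  have hnext : (minpoly K α).nextCoeff = 0 := by
    rw [hmin, Polynomial.nextCoeff_of_natDegree_pos (by omega), hdeg]
    simp [hp_def, Polynomial.coeff_X_pow]
  have hgen : minpoly K (AdjoinSimple.gen K α) = minpoly K α := by
    have h := minpoly.algebraMap_eq (A := K) (algebraMap K⟮α⟯ L).injective
      (AdjoinSimple.gen K α)
    rw [AdjoinSimple.algebraMap_gen] at h; exact h.symm
  rw [trace_eq_trace_adjoin K α]
  rw [← IntermediateField.adjoin.powerBasis_gen hint, PowerBasis.trace_gen_eq_nextCoeff_minpoly,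
    IntermediateField.adjoin.powerBasis_gen hint, hgen, hnext]
  simp

theorem sum_even_of_sqrt_eq (k l : ℕ) (hl : 1 ≤ l) (hlk : l < k) (n : ℕ → ℕ)
    (hpos : ∀ j ∈ Finset.Icc 1 k, 0 < n j)
    (heq : ∑ j ∈ Finset.Icc 1 l, Real.sqrt (n j)
         = ∑ j ∈ Finset.Icc (l+1) k, Real.sqrt (n j)) :
    Even (∑ j ∈ Finset.Icc 1 k, n j) := by
  classical
  obtain ⟨h, m, hmh, hsf⟩ :
      ∃ h m : ℕ → ℕ, (∀ j, (m j) ^ 2 * h j = n j) ∧ ∀ j, Squarefree (h j) := by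
    choose h m hmh hsf using fun j => Nat.sq_mul_squarefree (n j)
    exact ⟨h, m, hmh, hsf⟩
  have hA : Finset.Icc 1 l ⊆ Finset.Icc 1 k := by
    intro j hj; simp only [Finset.mem_Icc] at *; omega
  have hB : Finset.Icc (l+1) k ⊆ Finset.Icc 1 k := by
    intro j hj; simp only [Finset.mem_Icc] at *; omega
  have hm_pos : ∀ j ∈ Finset.Icc 1 k, 0 < m j ∧ 0 < h j := by
    intro j hj
    have := hpos j hj
    rw [← hmh j] at this
    exact ⟨Nat.pos_of_ne_zero fun e => by simp [e] at this,
      Nat.pos_of_ne_zero fun e => by simp [e] at this⟩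
  -- the field
  set S : Set ℝ := ↑((Finset.Icc 1 k).image fun j => Real.sqrt (n j)) with hS
  haveI : FiniteDimensional ℚ (adjoin ℚ S) := by
    apply IntermediateField.finiteDimensional_adjoin
    rintro x hx
    simp only [hS, Finset.coe_image, Set.mem_image, Finset.mem_coe] at hx
    obtain ⟨j, -, rfl⟩ := hx
    exact isIntegral_sqrt_nat (n j)
  set F := adjoin ℚ S with hF
  have hmem : ∀ j ∈ Finset.Icc 1 k, Real.sqrt (n j) ∈ F := by
    intro j hj
    apply subset_adjoin
    simp only [hS, Finset.coe_image, Set.mem_image, Finset.mem_coe]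
    exact ⟨j, hj, rfl⟩
  set α : ℕ → F := fun j =>
    if hj : j ∈ Finset.Icc 1 k then ⟨Real.sqrt (n j), hmem j hj⟩ else 0 with hαdef
  have hinj : Function.Injective (algebraMap F ℝ) := (algebraMap F ℝ).injective
  have hα : ∀ j ∈ Finset.Icc 1 k, algebraMap F ℝ (α j) = Real.sqrt (n j) := by
    intro j hj
    simp only [hαdef]
    rw [dif_pos hj]
    rfl
  have hQ : ∀ q : ℚ, algebraMap F ℝ (algebraMap ℚ F q) = (q : ℝ) := by
    intro q
    rw [← IsScalarTower.algebraMap_apply]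
    exact eq_ratCast (algebraMap ℚ ℝ) q
  have heqF : ∑ j ∈ Finset.Icc 1 l, α j = ∑ j ∈ Finset.Icc (l+1) k, α j := by
    apply hinj
    rw [map_sum, map_sum]
    rw [Finset.sum_congr rfl fun j hj => hα j (hA hj),
      Finset.sum_congr rfl fun j hj => hα j (hB hj)]
    exact heq
  have sqrt_mul_sqrt : ∀ j ∈ Finset.Icc 1 k, ∀ t ∈ Finset.Icc 1 k,
      algebraMap F ℝ (α j * α t) = Real.sqrt ((n j * n t : ℕ)) := by
    intro j hj t ht
    rw [map_mul, hα j hj, hα t ht, ← Real.sqrt_mul (Nat.cast_nonneg _)]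
    push_cast
    ring_nf
  have tr : ∀ j ∈ Finset.Icc 1 k, ∀ t ∈ Finset.Icc 1 k,
      Algebra.trace ℚ F (α j * α t) =
      if h j = h t then (Module.finrank ℚ F : ℚ) * ((m j : ℚ) * m t * h t) else 0 := by
    intro j hj t ht
    by_cases hcase : h j = h t
    · have hprod : n j * n t = (m j * m t * h t) ^ 2 := by
        rw [← hmh j, ← hmh t, hcase]; ring
      have hval : α j * α t = algebraMap ℚ F ((m j * m t * h t : ℕ) : ℚ) := by
        apply hinj
        rw [sqrt_mul_sqrt j hj t ht, hQ, hprod]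
        push_cast
        rw [Real.sqrt_sq (by positivity)]
      rw [hval, Algebra.trace_algebraMap, if_pos hcase]
      push_cast
      rw [nsmul_eq_mul]
    · have hns : ¬ IsSquare (n j * n t) := by
        rintro ⟨c, hc⟩
        apply hcase
        apply sqfree_eq_of_isSquare (hsf j) (hsf t)
        have hfac : n j * n t = (m j * m t) ^ 2 * (h j * h t) := by
          rw [← hmh j, ← hmh t]; ring
        have hmjt : 0 < m j * m t :=
          Nat.mul_pos (hm_pos j hj).1 (hm_pos t ht).1
        have hdvd : (m j * m t) ∣ c := by
          rw [← Nat.pow_dvd_pow_iff (two_ne_zero)]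
          refine ⟨h j * h t, ?_⟩
          rw [← hfac, hc]; ring
        obtain ⟨d, rfl⟩ := hdvd
        refine ⟨d, ?_⟩
        have : (m j * m t) ^ 2 * (h j * h t) = (m j * m t) ^ 2 * (d * d) := by
          rw [← hfac, hc]; ring
        exact Nat.eq_of_mul_eq_mul_left (by positivity) this
      have hsq : (α j * α t) ^ 2 = algebraMap ℚ F ((n j * n t : ℕ) : ℚ) := by
        apply hinj
        rw [map_pow, sqrt_mul_sqrt j hj t ht, hQ, Real.sq_sqrt (Nat.cast_nonneg _)]
        push_cast; ring
      have hirr : α j * α t ∉ Set.range (algebraMap ℚ F) := by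
        rintro ⟨q, hq⟩
        have hIr : Irrational (Real.sqrt ((n j * n t : ℕ))) :=
          irrational_sqrt_natCast_iff.2 hns
        apply hIr
        exact ⟨q, by rw [← sqrt_mul_sqrt j hj t ht, ← hq, hQ]⟩
      rw [if_neg hcase]
      exact trace_eq_zero_of_sq hsq hirr
  have key : ∀ t ∈ Finset.Icc 1 k,
      (∑ j ∈ (Finset.Icc 1 l).filter fun j => h j = h t, m j)
      = ∑ j ∈ (Finset.Icc (l+1) k).filter fun j => h j = h t, m j := by
    intro t ht
    have e1 := congrArg (fun x : F => Algebra.trace ℚ F (x * α t)) heqF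
    simp only [Finset.sum_mul, map_sum] at e1
    rw [Finset.sum_congr rfl fun j hj => tr j (hA hj) t ht,
      Finset.sum_congr rfl fun j hj => tr j (hB hj) t ht] at e1
    rw [Finset.sum_ite, Finset.sum_ite, Finset.sum_const, Finset.sum_const] at e1
    simp only [smul_zero, add_zero] at e1
    have e2 : ∀ (s : Finset ℕ),
        (∑ j ∈ s.filter fun j => h j = h t,
          (Module.finrank ℚ F : ℚ) * ((m j : ℚ) * m t * h t))
        = (Module.finrank ℚ F : ℚ) * ((m t : ℚ) * h t)
          * ((∑ j ∈ s.filter fun j => h j = h t, m j : ℕ) : ℚ) := by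
      intro s
      push_cast
      rw [Finset.mul_sum]
      apply Finset.sum_congr rfl
      intro j hj
      ring
    rw [e2, e2] at e1
    have hd : (Module.finrank ℚ F : ℚ) ≠ 0 := by
      exact_mod_cast Module.finrank_pos.ne'
    have hmt : ((m t : ℚ) * h t) ≠ 0 := by
      exact mul_ne_zero (by exact_mod_cast (hm_pos t ht).1.ne')
        (by exact_mod_cast (hm_pos t ht).2.ne')
    have := mul_left_cancel₀ (mul_ne_zero hd hmt) e1
    exact_mod_cast this
  -- final parity argument in ZMod 2
  have hun : Finset.Icc 1 l ∪ Finset.Icc (l+1) k = Finset.Icc 1 k := by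
    ext x; simp only [Finset.mem_Icc, Finset.mem_union]; omega
  have hdis : Disjoint (Finset.Icc 1 l) (Finset.Icc (l+1) k) := by
    rw [Finset.disjoint_left]
    intro a ha hb
    simp only [Finset.mem_Icc] at ha hb
    omega
  rw [even_iff_two_dvd, ← ZMod.natCast_eq_zero_iff]
  push_cast
  have hterm : ∀ j ∈ Finset.Icc 1 k,
      ((n j : ZMod 2)) = (m j : ZMod 2) * (h j : ZMod 2) := by
    intro j hj
    rw [← hmh j]
    push_cast
    have hx : ∀ x : ZMod 2, x ^ 2 = x := by decide
    rw [hx]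
  rw [Finset.sum_congr rfl hterm]
  rw [← Finset.sum_fiberwise_of_maps_to
    (fun j hj => Finset.mem_image_of_mem h hj : ∀ j ∈ Finset.Icc 1 k,
      h j ∈ (Finset.Icc 1 k).image h)]
  apply Finset.sum_eq_zero
  intro b hb
  obtain ⟨t, ht, rfl⟩ := Finset.mem_image.1 hb
  have hfil : (Finset.Icc 1 k).filter (fun j => h j = h t)
      = ((Finset.Icc 1 l).filter fun j => h j = h t)
        ∪ ((Finset.Icc (l+1) k).filter fun j => h j = h t) := by
    rw [← hun, Finset.filter_union]
  rw [hfil, Finset.sum_union (hdis.mono (Finset.filter_subset _ _) (Finset.filter_subset _ _))]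
  have hpart : ∀ s : Finset ℕ,
      ∑ j ∈ s.filter (fun j => h j = h t), (m j : ZMod 2) * (h j : ZMod 2)
      = ((∑ j ∈ s.filter (fun j => h j = h t), m j : ℕ) : ZMod 2) * (h t : ZMod 2) := by
    intro s
    push_cast
    rw [Finset.sum_mul]
    apply Finset.sum_congr rfl
    intro j hj
    rw [(Finset.mem_filter.1 hj).2]
  rw [hpart, hpart, key t ht]
  rw [← two_mul]
  rw [show (2 : ZMod 2) = 0 from rfl, zero_mul]
end

section
/- The square roots of distinct squarefree positive integers are linearly independent over the rationals: if h_1, ..., h_s are distinct squarefree positive integers and q_1, ..., q_s are rational numbers with q_1√h_1 + ... + q_s√h_s = 0, then q_1 = ... = q_s = 0. -/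
open Real

noncomputable def sqK (P : Finset ℕ) : IntermediateField ℚ ℝ :=
  IntermediateField.adjoin ℚ ((fun p : ℕ => Real.sqrt p) '' ↑P)

lemma sqK_mono {P Q : Finset ℕ} (h : P ⊆ Q) : sqK P ≤ sqK Q :=
  IntermediateField.adjoin.mono _ _ _ (Set.image_mono h)

lemma sqrt_mem_sqK {P : Finset ℕ} {p : ℕ} (hp : p ∈ P) : Real.sqrt p ∈ sqK P :=
  IntermediateField.subset_adjoin _ _ ⟨p, hp, rfl⟩

lemma sqrt_prod (F : Finset ℕ) : Real.sqrt (∏ p ∈ F, (p : ℝ)) = ∏ p ∈ F, Real.sqrt p := by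
  induction F using Finset.induction_on with
  | empty => simp
  | @insert _ _ hx ih =>
    rw [Finset.prod_insert hx, Finset.prod_insert hx, ← ih,
      Real.sqrt_mul (Nat.cast_nonneg _)]

lemma sqrt_mem_sqK_of_squarefree {P : Finset ℕ} {n : ℕ} (hn : Squarefree n)
    (hP : n.primeFactors ⊆ P) : Real.sqrt n ∈ sqK P := by
  have h1 : ((n : ℝ)) = ∏ p ∈ n.primeFactors, (p : ℝ) := by
    rw [← Nat.cast_prod, Nat.prod_primeFactors_of_squarefree hn]
  rw [h1, _root_.sqrt_prod]
  exact Subfield.prod_mem _ fun p hp => sqrt_mem_sqK (hP hp)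

lemma sqK_insert_decomp {P : Finset ℕ} {r : ℕ} (hr : Real.sqrt r ∉ sqK P)
    {x : ℝ} (hx : x ∈ sqK (insert r P)) :
    ∃ a b : ℝ, a ∈ sqK P ∧ b ∈ sqK P ∧ x = a + b * Real.sqrt r := by
  have hrK : (r : ℝ) ∈ sqK P := by
    exact_mod_cast IntermediateField.natCast_mem (sqK P) r
  have hsq : Real.sqrt r * Real.sqrt r = (r : ℝ) :=
    Real.mul_self_sqrt (Nat.cast_nonneg r)
  set S : Set ℝ := {x | ∃ a b : ℝ, a ∈ sqK P ∧ b ∈ sqK P ∧ x = a + b * Real.sqrt r} with hS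
  have hadd : ∀ x ∈ S, ∀ y ∈ S, x + y ∈ S := by
    rintro x ⟨a, b, ha, hb, rfl⟩ y ⟨c, d, hc, hd, rfl⟩
    exact ⟨a + c, b + d, add_mem ha hc, add_mem hb hd, by ring⟩
  have hmul : ∀ x ∈ S, ∀ y ∈ S, x * y ∈ S := by
    rintro x ⟨a, b, ha, hb, rfl⟩ y ⟨c, d, hc, hd, rfl⟩
    refine ⟨a * c + b * d * r, a * d + b * c,
      add_mem (mul_mem ha hc) (mul_mem (mul_mem hb hd) hrK),
      add_mem (mul_mem ha hd) (mul_mem hb hc), ?_⟩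
    have h2 : (a + b * Real.sqrt r) * (c + d * Real.sqrt r)
        = a * c + b * d * (Real.sqrt r * Real.sqrt r)
          + (a * d + b * c) * Real.sqrt r := by ring
    rw [h2, hsq]
  have hneg : ∀ x ∈ S, -x ∈ S := by
    rintro x ⟨a, b, ha, hb, rfl⟩
    exact ⟨-a, -b, neg_mem ha, neg_mem hb, by ring⟩
  have hinv : ∀ x ∈ S, x⁻¹ ∈ S := by
    rintro x ⟨a, b, ha, hb, rfl⟩
    rcases eq_or_ne (a + b * Real.sqrt r) 0 with h0 | h0
    · exact ⟨0, 0, zero_mem _, zero_mem _, by rw [h0]; simp⟩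
    · have hD : a * a - b * b * r ≠ 0 := by
        intro hD
        rcases eq_or_ne b 0 with hb0 | hb0
        · apply h0
          have h3 : a * a = 0 := by rw [← hD, hb0]; ring
          rw [mul_self_eq_zero.mp h3, hb0]; ring
        · apply hr
          have h1 : (Real.sqrt r) ^ 2 = (a / b) ^ 2 := by
            rw [sq, hsq, div_pow]
            rw [eq_div_iff (pow_ne_zero 2 hb0)]
            nlinarith [hD]
          rcases sq_eq_sq_iff_eq_or_eq_neg.mp h1 with h | h <;> rw [h]
          · exact div_mem ha hb
          · exact neg_mem (div_mem ha hb)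
      set D : ℝ := a * a - b * b * r with hDdef
      have hDK : D ∈ sqK P := sub_mem (mul_mem ha ha) (mul_mem (mul_mem hb hb) hrK)
      refine ⟨a / D, -b / D, div_mem ha hDK, div_mem (neg_mem hb) hDK, ?_⟩
      rw [eq_comm]
      apply eq_inv_of_mul_eq_one_left
      have h4 : (a / D + -b / D * Real.sqrt r) * (a + b * Real.sqrt r)
          = (a * a - b * b * (Real.sqrt r * Real.sqrt r)) / D := by
        field_simp
        ring
      rw [h4, hsq, ← hDdef, div_self hD]
  set E : IntermediateField ℚ ℝ :=
    { carrier := S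
      add_mem' := fun {x y} hx hy => hadd x hx y hy
      mul_mem' := fun {x y} hx hy => hmul x hx y hy
      inv_mem' := hinv
      algebraMap_mem' := fun q => ⟨(q : ℝ), 0,
        (by simpa using IntermediateField.algebraMap_mem (sqK P) q),
        zero_mem _, by rw [eq_ratCast (algebraMap ℚ ℝ) q]; ring⟩ } with hE
  have hle : sqK (insert r P) ≤ E := by
    rw [sqK, IntermediateField.adjoin_le_iff]
    rintro x ⟨p, hp, rfl⟩
    rcases Finset.mem_insert.mp (by exact_mod_cast hp) with h | h
    · exact ⟨0, 1, zero_mem _, one_mem _, by rw [h]; ring⟩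
    · exact ⟨Real.sqrt p, 0, sqrt_mem_sqK h, zero_mem _, by ring⟩
  exact hle hx

lemma not_isSquare_of_squarefree {m q : ℕ} (hm : Squarefree m) (hq : q.Prime) (hqm : q ∣ m) :
    ¬ IsSquare m := by
  rintro ⟨k, rfl⟩
  have hk : IsUnit k := hm k (dvd_refl _)
  have : k = 1 := Nat.isUnit_iff.mp hk
  subst this
  exact hq.one_lt.ne' (Nat.eq_one_of_dvd_one (by simpa using hqm)) |>.elim

lemma sqrt_not_mem_sqK : ∀ (P : Finset ℕ), (∀ p ∈ P, p.Prime) → ∀ m : ℕ, Squarefree m →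
    (∃ q : ℕ, q.Prime ∧ q ∣ m ∧ q ∉ P) → Real.sqrt m ∉ sqK P := by
  intro P
  induction P using Finset.induction_on with
  | empty =>
    intro _ m hm ⟨q, hq, hqm, _⟩ hmem
    have hirr : Irrational (Real.sqrt m) :=
      irrational_sqrt_natCast_iff.mpr (not_isSquare_of_squarefree hm hq hqm)
    rw [sqK] at hmem
    simp only [Finset.coe_empty, Set.image_empty, IntermediateField.adjoin_empty] at hmem
    rw [IntermediateField.mem_bot] at hmem
    obtain ⟨y, hy⟩ := hmem
    exact hirr ⟨y, by simpa using hy⟩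
  | @insert r P' hrP' ih =>
    intro hprime m hm ⟨qp, hqp, hqm, hqP⟩ hmem
    have hprime' : ∀ p ∈ P', p.Prime := fun p hp => hprime p (Finset.mem_insert_of_mem hp)
    have hrP : r.Prime := hprime r (Finset.mem_insert_self r P')
    have hrnot : Real.sqrt r ∉ sqK P' :=
      ih hprime' r hrP.squarefree ⟨r, hrP, dvd_rfl, hrP'⟩
    obtain ⟨a, b, ha, hb, hab⟩ := sqK_insert_decomp hrnot hmem
    have hsqr : Real.sqrt r * Real.sqrt r = (r : ℝ) := Real.mul_self_sqrt (Nat.cast_nonneg r)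
    have hm2 : Real.sqrt m * Real.sqrt m = (m : ℝ) := Real.mul_self_sqrt (Nat.cast_nonneg m)
    rw [hab] at hm2
    have key : 2 * a * b * Real.sqrt r = (m : ℝ) - a * a - b * b * r := by
      linear_combination hm2 - (b * b) * hsqr
    have hrK : (r : ℝ) ∈ sqK P' := by
      exact_mod_cast IntermediateField.natCast_mem (sqK P') r
    have hmK : (m : ℝ) ∈ sqK P' := by
      exact_mod_cast IntermediateField.natCast_mem (sqK P') m
    rcases eq_or_ne b 0 with hb0 | hb0
    · -- √m = a ∈ sqK P'
      apply ih hprime' m hm ⟨qp, hqp, hqm, fun hc => hqP (Finset.mem_insert_of_mem hc)⟩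
      rw [hab, hb0]
      simpa using ha
    rcases eq_or_ne a 0 with ha0 | ha0
    · -- √m = b * √r
      rw [ha0, zero_add] at hab
      have hqr : qp ≠ r := fun hc => hqP (hc ▸ Finset.mem_insert_self r P')
      by_cases hrm : r ∣ m
      · obtain ⟨m', hm'⟩ := hrm
        have hm'sf : Squarefree m' := hm.squarefree_of_dvd ⟨r, by rw [hm']; ring⟩
        have hrne : Real.sqrt r ≠ 0 := by
          rw [Real.sqrt_ne_zero' ]
          exact_mod_cast hrP.pos
        have hsplit : Real.sqrt m = Real.sqrt r * Real.sqrt m' := by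
          rw [hm', Nat.cast_mul, Real.sqrt_mul (Nat.cast_nonneg r)]
        have hbm' : Real.sqrt m' = b := by
          have h5 : Real.sqrt m' * Real.sqrt r = b * Real.sqrt r := by
            rw [mul_comm, ← hsplit, hab]
          exact mul_right_cancel₀ hrne h5
        have hqm' : qp ∣ m' := by
          rcases (Nat.Prime.dvd_mul hqp).mp (hm' ▸ hqm) with h | h
          · exact absurd ((Nat.prime_dvd_prime_iff_eq hqp hrP).mp h) hqr
          · exact h
        apply ih hprime' m' hm'sf ⟨qp, hqp, hqm', fun hc => hqP (Finset.mem_insert_of_mem hc)⟩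
        rw [hbm']
        exact hb
      · -- r ∤ m : √(m*r) = b*r ∈ sqK P'
        have hcop : Nat.Coprime m r := ((Nat.Prime.coprime_iff_not_dvd hrP).mpr hrm).symm
        have hmrsf : Squarefree (m * r) := (Nat.squarefree_mul hcop).mpr ⟨hm, hrP.squarefree⟩
        apply ih hprime' (m * r) hmrsf
          ⟨qp, hqp, hqm.mul_right r, fun hc => hqP (Finset.mem_insert_of_mem hc)⟩
        have hsq2 : Real.sqrt ((m : ℕ) * r : ℕ) = b * r := by
          rw [Nat.cast_mul, Real.sqrt_mul (Nat.cast_nonneg m), hab, mul_assoc, hsqr]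
        rw [hsq2]
        exact mul_mem hb hrK
    · -- a ≠ 0, b ≠ 0 : √r ∈ sqK P'
      apply hrnot
      have : Real.sqrt r = ((m : ℝ) - a * a - b * b * r) / (2 * a * b) := by
        rw [← key]
        field_simp
      rw [this]
      exact div_mem (sub_mem (sub_mem hmK (mul_mem ha ha)) (mul_mem (mul_mem hb hb) hrK))
        (mul_mem (mul_mem (by exact_mod_cast IntermediateField.natCast_mem (sqK P') 2) ha) hb)

lemma ratCast_mem_sqK (P : Finset ℕ) (a : ℚ) : ((a : ℝ)) ∈ sqK P := by
  simpa using IntermediateField.algebraMap_mem (sqK P) a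

lemma sqrt_linear_indep : ∀ (P : Finset ℕ), (∀ p ∈ P, p.Prime) → ∀ (T : Finset ℕ),
    (∀ n ∈ T, Squarefree n ∧ n.primeFactors ⊆ P) → ∀ (q : ℕ → ℚ),
    ∑ n ∈ T, (q n : ℝ) * Real.sqrt n = 0 → ∀ n ∈ T, q n = 0 := by
  intro P
  induction P using Finset.induction_on with
  | empty =>
    intro _ T hT q hsum n hn
    have hone : ∀ n ∈ T, n = 1 := by
      intro n hn
      obtain ⟨hsf, hfac⟩ := hT n hn
      rcases Nat.primeFactors_eq_empty.mp (Finset.subset_empty.mp hfac) with h | h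
      · exact absurd h hsf.ne_zero
      · exact h
    rcases Finset.subset_singleton_iff.mp (fun x hx => Finset.mem_singleton.mpr (hone x hx))
      with hT1 | hT1
    · exact absurd (hT1 ▸ hn) (Finset.notMem_empty n)
    · rw [hT1] at hsum hn
      rw [Finset.sum_singleton] at hsum
      simp only [Nat.cast_one, Real.sqrt_one, mul_one] at hsum
      rw [Finset.mem_singleton.mp hn]
      exact_mod_cast hsum
  | @insert r P' hrP' ih =>
    intro hprime T hT q hsum n hn
    have hprime' : ∀ p ∈ P', p.Prime := fun p hp => hprime p (Finset.mem_insert_of_mem hp)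
    have hrP : r.Prime := hprime r (Finset.mem_insert_self r P')
    have hrnot : Real.sqrt r ∉ sqK P' :=
      sqrt_not_mem_sqK P' hprime' r hrP.squarefree ⟨r, hrP, dvd_rfl, hrP'⟩
    classical
    set T₁ := T.filter (fun n => ¬ r ∣ n) with hT₁
    set T₂ := T.filter (fun n => r ∣ n) with hT₂
    have hT₁fac : ∀ n ∈ T₁, Squarefree n ∧ n.primeFactors ⊆ P' := by
      intro n hn
      obtain ⟨hnT, hnd⟩ := Finset.mem_filter.mp hn
      obtain ⟨hsf, hfac⟩ := hT n hnT
      refine ⟨hsf, fun p hp => ?_⟩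
      rcases Finset.mem_insert.mp (hfac hp) with h | h
      · exact absurd (h ▸ Nat.dvd_of_mem_primeFactors hp) hnd
      · exact h
    have hT₂fac : ∀ n ∈ T₂, Squarefree (n / r) ∧ (n / r).primeFactors ⊆ P' ∧ n = r * (n / r) := by
      intro n hn
      obtain ⟨hnT, hnd⟩ := Finset.mem_filter.mp hn
      obtain ⟨hsf, hfac⟩ := hT n hnT
      have hneq : n = r * (n / r) := (Nat.mul_div_cancel' hnd).symm
      have hsf' : Squarefree (n / r) := hsf.squarefree_of_dvd (Nat.div_dvd_of_dvd hnd)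
      refine ⟨hsf', fun p hp => ?_, hneq⟩
      have hpn : p ∈ n.primeFactors :=
        Nat.primeFactors_mono (Nat.div_dvd_of_dvd hnd) hsf.ne_zero hp
      rcases Finset.mem_insert.mp (hfac hpn) with h | h
      · exfalso
        subst h
        have hdvd : p * p ∣ p * (n / p) := mul_dvd_mul_left p (Nat.dvd_of_mem_primeFactors hp)
        rw [← hneq] at hdvd
        exact hrP.not_isUnit (hsf p hdvd)
      · exact h
    set A := ∑ n ∈ T₁, (q n : ℝ) * Real.sqrt n with hA
    set B := ∑ n ∈ T₂, (q n : ℝ) * Real.sqrt (n / r : ℕ) with hB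
    have hsplit : A + B * Real.sqrt r = 0 := by
      rw [hA, hB, Finset.sum_mul]
      have h1 : ∑ n ∈ T₂, (q n : ℝ) * Real.sqrt (n / r : ℕ) * Real.sqrt r
          = ∑ n ∈ T₂, (q n : ℝ) * Real.sqrt n := by
        apply Finset.sum_congr rfl
        intro n hn
        obtain ⟨_, _, hneq⟩ := hT₂fac n hn
        rw [mul_assoc, ← Real.sqrt_mul (Nat.cast_nonneg _), ← Nat.cast_mul,
          mul_comm (n / r) r, ← hneq]
      rw [h1, hT₁, hT₂, add_comm, Finset.sum_filter_add_sum_filter_not]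
      exact hsum
    have hAK : A ∈ sqK P' := by
      apply Subfield.sum_mem
      intro n hn
      obtain ⟨hsf, hfac⟩ := hT₁fac n hn
      exact mul_mem (ratCast_mem_sqK P' (q n)) (sqrt_mem_sqK_of_squarefree hsf hfac)
    have hBK : B ∈ sqK P' := by
      apply Subfield.sum_mem
      intro n hn
      obtain ⟨hsf, hfac, _⟩ := hT₂fac n hn
      exact mul_mem (ratCast_mem_sqK P' (q n)) (sqrt_mem_sqK_of_squarefree hsf hfac)
    have hB0 : B = 0 := by
      by_contra hB0
      apply hrnot
      have h6 : Real.sqrt r = -A / B := by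
        field_simp
        linarith [hsplit]
      rw [h6]
      exact div_mem (neg_mem hAK) hBK
    have hA0 : A = 0 := by
      rw [hB0] at hsplit
      simpa using hsplit
    have hq₁ : ∀ n ∈ T₁, q n = 0 := ih hprime' T₁ hT₁fac q hA0
    have hq₂ : ∀ n ∈ T₂, q n = 0 := by
      intro n hn
      set T₂' := T₂.image (fun n => n / r) with hT₂'
      have hinj2 : Set.InjOn (fun n => n / r) ↑T₂ := by
        intro x hx y hy hxy
        obtain ⟨_, _, hxeq⟩ := hT₂fac x hx
        obtain ⟨_, _, hyeq⟩ := hT₂fac y hy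
        simp only at hxy
        rw [hxeq, hyeq, hxy]
      have hsum2 : ∑ m ∈ T₂', ((q (r * m) : ℝ)) * Real.sqrt m = 0 := by
        rw [hT₂', Finset.sum_image (fun x hx y hy => hinj2 hx hy), ← hB0, hB]
        apply Finset.sum_congr rfl
        intro x hx
        obtain ⟨_, _, hxeq⟩ := hT₂fac x hx
        show ((q (r * (x / r)) : ℝ)) * Real.sqrt ((x / r : ℕ)) = _
        rw [← hxeq]
      have hT₂'fac : ∀ m ∈ T₂', Squarefree m ∧ m.primeFactors ⊆ P' := by
        intro m hm
        obtain ⟨x, hx, rfl⟩ := Finset.mem_image.mp hm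
        obtain ⟨h1, h2, _⟩ := hT₂fac x hx
        exact ⟨h1, h2⟩
      have h7 := ih hprime' T₂' hT₂'fac (fun m => q (r * m)) hsum2 (n / r)
        (Finset.mem_image_of_mem _ hn)
      obtain ⟨_, _, hneq⟩ := hT₂fac n hn
      have h8 : q (r * (n / r)) = 0 := h7
      rwa [← hneq] at h8
    by_cases hrd : r ∣ n
    · exact hq₂ n (Finset.mem_filter.mpr ⟨hn, hrd⟩)
    · exact hq₁ n (Finset.mem_filter.mpr ⟨hn, hrd⟩)

theorem besicovitch_sqrt_linear_independence (s : ℕ) (h : Fin s → ℕ)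
    (hsf : ∀ i, Squarefree (h i)) (hpos : ∀ i, 0 < h i)
    (hinj : Function.Injective h) (q : Fin s → ℚ)
    (heq : ∑ i, (q i : ℝ) * Real.sqrt (h i) = 0) :
    ∀ i, q i = 0 := by
  classical
  set P : Finset ℕ := Finset.univ.biUnion (fun i => (h i).primeFactors) with hP
  have hPprime : ∀ p ∈ P, p.Prime := by
    intro p hp
    obtain ⟨i, _, hpi⟩ := Finset.mem_biUnion.mp hp
    exact Nat.prime_of_mem_primeFactors hpi
  set T : Finset ℕ := Finset.univ.image h with hT
  set Q : ℕ → ℚ := fun n => if hx : ∃ i, h i = n then q hx.choose else 0 with hQ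
  have hQh : ∀ i, Q (h i) = q i := by
    intro i
    have hx : ∃ j, h j = h i := ⟨i, rfl⟩
    simp only [hQ, dif_pos hx]
    congr 1
    exact hinj hx.choose_spec
  have hTfac : ∀ n ∈ T, Squarefree n ∧ n.primeFactors ⊆ P := by
    intro n hn
    obtain ⟨i, _, rfl⟩ := Finset.mem_image.mp hn
    exact ⟨hsf i, fun p hp => Finset.mem_biUnion.mpr ⟨i, Finset.mem_univ i, hp⟩⟩
  have hsum : ∑ n ∈ T, (Q n : ℝ) * Real.sqrt n = 0 := by
    rw [hT, Finset.sum_image (fun x _ y _ hxy => hinj hxy)]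
    rw [← heq]
    exact Finset.sum_congr rfl fun i _ => by rw [hQh i]
  intro i
  have := sqrt_linear_indep P hPprime T hTfac Q hsum (h i)
    (Finset.mem_image_of_mem h (Finset.mem_univ i))
  rwa [hQh i] at this
end

section
/- Let 1 ≤ l < k and define d*(n) = (−1)^n d(n), where d is the divisor function. Then s_{k;l}(d*) = s_{k;l}(d), i.e., Σ (−1)^{n_1+...+n_k} d(n_1)⋯d(n_k)/(n_1⋯n_k)^{3/4} = Σ d(n_1)⋯d(n_k)/(n_1⋯n_k)^{3/4}, both sums over k-tuples with √n_1 + ... + √n_l = √n_{l+1} + ... + √n_k. -/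
lemma half_not_integral : ¬ IsIntegral ℤ ((2:ℝ)⁻¹) := by
  intro h
  have h2 : IsIntegral ℤ ((2:ℚ)⁻¹) := by
    rw [← isIntegral_algebraMap_iff (B := ℝ) (algebraMap ℚ ℝ).injective]
    simpa using h
  obtain ⟨z, hz⟩ := IsIntegrallyClosed.isIntegral_iff.mp h2
  have : (z : ℚ) = 2⁻¹ := by simpa using hz
  have : (2 : ℚ) * z = 1 := by rw [this]; norm_num
  have : (2 : ℤ) * z = 1 := by exact_mod_cast this
  omega

lemma exists_cross {ι : Type*} (s : Finset ι) (g : ι → ℝ)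
    (hg : ∀ i, g i ∈ integralClosure ℤ ℝ) :
    ∃ c : ℝ, c ∈ integralClosure ℤ ℝ ∧
      (∑ i ∈ s, g i) ^ 2 = (∑ i ∈ s, (g i) ^ 2) + 2 * c := by
  classical
  induction s using Finset.induction with
  | empty => exact ⟨0, Subalgebra.zero_mem _, by simp⟩
  | @insert a t ha ih =>
      obtain ⟨c, hc, hcc⟩ := ih
      refine ⟨g a * ∑ i ∈ t, g i + c, ?_, ?_⟩
      · exact Subalgebra.add_mem _
          (Subalgebra.mul_mem _ (hg a) (Subalgebra.sum_mem _ fun i _ => hg i)) hc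
      · rw [Finset.sum_insert ha, Finset.sum_insert ha, add_sq, hcc]; ring

lemma even_of_sqrt_sum_eq {ι : Type*} (A B : Finset ι) (m : ι → ℕ)
    (h : ∑ j ∈ A, Real.sqrt (m j) = ∑ j ∈ B, Real.sqrt (m j)) :
    (∑ j ∈ A, m j) % 2 = (∑ j ∈ B, m j) % 2 := by
  classical
  have hint : ∀ j, Real.sqrt (m j) ∈ integralClosure ℤ ℝ := by
    intro j
    refine ⟨Polynomial.X ^ 2 - Polynomial.C (m j : ℤ), ?_, ?_⟩
    · exact Polynomial.monic_X_pow_sub_C _ two_ne_zero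
    · simp [Real.sq_sqrt (Nat.cast_nonneg (m j))]
  obtain ⟨c₁, hc₁, h1⟩ := exists_cross A _ hint
  obtain ⟨c₂, hc₂, h2⟩ := exists_cross B _ hint
  have hsq : ∀ j, Real.sqrt (m j) ^ 2 = (m j : ℝ) :=
    fun j => Real.sq_sqrt (Nat.cast_nonneg (m j))
  simp only [hsq] at h1 h2
  rw [h] at h1
  rw [h1] at h2
  -- h2 : ∑_A m + 2 c₁ = ∑_B m + 2 c₂  (in ℝ)
  by_contra hne
  have hne' : (∑ j ∈ A, m j) % 2 ≠ (∑ j ∈ B, m j) % 2 := hne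
  obtain ⟨t, ht⟩ : ∃ t : ℤ, ((∑ j ∈ A, m j : ℕ) : ℤ) - ((∑ j ∈ B, m j : ℕ) : ℤ) = 2 * t + 1 := by
    rcases Int.even_or_odd (((∑ j ∈ A, m j : ℕ) : ℤ) - ((∑ j ∈ B, m j : ℕ) : ℤ)) with he | ho
    · obtain ⟨r, hr⟩ := he
      exfalso
      omega
    · obtain ⟨t, ht⟩ := ho
      exact ⟨t, ht⟩
  have htR : (((∑ j ∈ A, m j : ℕ)) : ℝ) - ((∑ j ∈ B, m j : ℕ) : ℝ) = 2 * (t : ℝ) + 1 := by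
    exact_mod_cast congrArg (fun z : ℤ => (z : ℝ)) ht
  push_cast at htR
  have key : (2:ℝ) * (c₂ - c₁ - t) = 1 := by
    push_cast at h2
    nlinarith [h2, htR]
  have hmem : c₂ - c₁ - (t : ℝ) ∈ integralClosure ℤ ℝ := by
    exact Subalgebra.sub_mem _ (Subalgebra.sub_mem _ hc₂ hc₁) (Subalgebra.intCast_mem _ t)
  have : c₂ - c₁ - (t : ℝ) = 2⁻¹ := by linarith
  rw [this] at hmem
  exact half_not_integral hmem

theorem skl_dstar_eq_skl_d (k l : ℕ) (hl : 1 ≤ l) (hlk : l < k) :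
    (∑' n : {n : Fin k → ℕ // (∀ j, 0 < n j) ∧
        ∑ j ∈ Finset.univ.filter (fun j : Fin k => (j:ℕ) < l), Real.sqrt (n j) =
        ∑ j ∈ Finset.univ.filter (fun j : Fin k => l ≤ (j:ℕ)), Real.sqrt (n j)},
      (-1:ℝ) ^ (∑ j, n.1 j) *
        ((∏ j, ((n.1 j).divisors.card : ℝ)) / (∏ j, (n.1 j : ℝ)) ^ ((3:ℝ)/4))) =
    (∑' n : {n : Fin k → ℕ // (∀ j, 0 < n j) ∧
        ∑ j ∈ Finset.univ.filter (fun j : Fin k => (j:ℕ) < l), Real.sqrt (n j) =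
        ∑ j ∈ Finset.univ.filter (fun j : Fin k => l ≤ (j:ℕ)), Real.sqrt (n j)},
      (∏ j, ((n.1 j).divisors.card : ℝ)) / (∏ j, (n.1 j : ℝ)) ^ ((3:ℝ)/4)) := by
  apply tsum_congr
  intro n
  have heq := n.2.2
  have hmod := even_of_sqrt_sum_eq _ _ n.1 heq
  have hfe : Finset.univ.filter (fun j : Fin k => l ≤ (j:ℕ)) =
      Finset.univ.filter (fun j : Fin k => ¬ (j:ℕ) < l) := by
    ext j; simp [not_lt]
  have hs2 : (∑ j ∈ Finset.univ.filter (fun j : Fin k => l ≤ (j:ℕ)), n.1 j) =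
      ∑ j ∈ Finset.univ.filter (fun j : Fin k => ¬ (j:ℕ) < l), n.1 j :=
    Finset.sum_congr hfe (fun _ _ => rfl)
  have hsplit : ∑ j, n.1 j =
      (∑ j ∈ Finset.univ.filter (fun j : Fin k => (j:ℕ) < l), n.1 j) +
      (∑ j ∈ Finset.univ.filter (fun j : Fin k => ¬ (j:ℕ) < l), n.1 j) := by
    rw [Finset.sum_filter_add_sum_filter_not Finset.univ (fun j : Fin k => (j:ℕ) < l) n.1]
  have heven : Even (∑ j, n.1 j) := by
    rw [hsplit, Nat.even_iff]
    omega
  rw [heven.neg_one_pow, one_mul]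
end

section
/- For y ≥ 2 and T ≥ 2 with y < T, Σ_{y < m < n ≤ T} d(n)d(m) / ((mn)^{3/4}(√n − √m)) ≤ C(ε)·T^ε for every ε > 0, where d is the divisor function. -/
open Real Finset

lemma aux_linear (δ : ℝ) (hδ : 0 < δ) :
    ∃ B ≥ (1:ℝ), ∀ a : ℕ, (a + 1 : ℝ) ≤ B * (2:ℝ) ^ ((a:ℝ) * δ) := by
  have hl2 : 0 < Real.log 2 := Real.log_pos (by norm_num)
  refine ⟨1 + 1 / (δ * Real.log 2), by
    have : 0 < 1 / (δ * Real.log 2) := by positivity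
    linarith, fun a => ?_⟩
  set B := 1 + 1 / (δ * Real.log 2) with hB
  have hB1 : (1:ℝ) ≤ B := by
    rw [hB]
    have : 0 < 1 / (δ * Real.log 2) := by positivity
    linarith
  have hBδ : 1 ≤ B * (δ * Real.log 2) := by
    rw [hB, add_mul, one_div, inv_mul_cancel₀ (by positivity)]
    nlinarith [mul_pos hδ hl2]
  have h2 : (2:ℝ) ^ ((a:ℝ) * δ) = Real.exp ((a:ℝ) * δ * Real.log 2) := by
    rw [Real.rpow_def_of_pos (by norm_num)]; ring_nf
  rw [h2]
  have hexp := Real.add_one_le_exp ((a:ℝ) * δ * Real.log 2)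
  calc (a + 1 : ℝ) ≤ B * (1 + (a:ℝ) * δ * Real.log 2) := by
        have h1 : (a:ℝ) * 1 ≤ (a:ℝ) * (B * (δ * Real.log 2)) :=
          mul_le_mul_of_nonneg_left hBδ (Nat.cast_nonneg a)
        nlinarith
    _ ≤ B * Real.exp ((a:ℝ) * δ * Real.log 2) := by
        apply mul_le_mul_of_nonneg_left _ (by linarith)
        linarith

lemma divisor_rpow_bound (δ : ℝ) (hδ : 0 < δ) :
    ∃ C ≥ (1:ℝ), ∀ n : ℕ, n ≠ 0 → (n.divisors.card : ℝ) ≤ C * (n:ℝ) ^ δ := by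
  obtain ⟨B, hB1, hBa⟩ := aux_linear δ hδ
  set P := ⌈(2:ℝ) ^ (1/δ)⌉₊ with hP
  refine ⟨B ^ P, by simpa using pow_le_pow_left₀ (by norm_num) hB1 P, fun n hn => ?_⟩
  have hcard : (n.divisors.card : ℝ) =
      ∏ p ∈ n.primeFactors, ((n.factorization p : ℝ) + 1) := by
    rw [Nat.card_divisors hn]
    push_cast
    rfl
  have hfac : ∏ p ∈ n.primeFactors, p ^ n.factorization p = n := by
    rw [← Nat.support_factorization]
    exact Nat.factorization_prod_pow_eq_self hn
  have hncast : (n:ℝ) = ∏ p ∈ n.primeFactors, ((p:ℝ)) ^ (n.factorization p) := by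
    conv_lhs => rw [← hfac]
    push_cast
    rfl
  have hnδ : (n:ℝ) ^ δ =
      ∏ p ∈ n.primeFactors, (p:ℝ) ^ ((n.factorization p : ℝ) * δ) := by
    rw [hncast, ← Real.finset_prod_rpow _ _ (fun p _ => by positivity) δ]
    apply Finset.prod_congr rfl
    intro p hp
    rw [← Real.rpow_natCast (p:ℝ) (n.factorization p), ← Real.rpow_mul (by positivity)]
  have key : ∀ p ∈ n.primeFactors,
      ((n.factorization p : ℝ) + 1) ≤
        (if p < P then B else 1) * (p:ℝ) ^ ((n.factorization p : ℝ) * δ) := by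
    intro p hp
    have hpp : p.Prime := Nat.prime_of_mem_primeFactors hp
    have hp2 : (2:ℝ) ≤ (p:ℝ) := by exact_mod_cast hpp.two_le
    set a := n.factorization p with ha
    by_cases hlt : p < P
    · rw [if_pos hlt]
      calc ((a:ℝ) + 1) ≤ B * (2:ℝ) ^ ((a:ℝ) * δ) := hBa a
        _ ≤ B * (p:ℝ) ^ ((a:ℝ) * δ) := by
            apply mul_le_mul_of_nonneg_left _ (by linarith)
            exact Real.rpow_le_rpow (by norm_num) hp2 (by positivity)
    · rw [if_neg hlt, one_mul]
      have hPp : ((2:ℝ) ^ (1/δ)) ≤ (p:ℝ) := by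
        calc ((2:ℝ) ^ (1/δ)) ≤ (P:ℝ) := Nat.le_ceil _
          _ ≤ (p:ℝ) := by exact_mod_cast Nat.not_lt.mp hlt
      have h2p : (2:ℝ) ≤ (p:ℝ) ^ δ := by
        have := Real.rpow_le_rpow (by positivity) hPp (le_of_lt hδ)
        rwa [← Real.rpow_mul (by norm_num), one_div, inv_mul_cancel₀ (ne_of_gt hδ),
          Real.rpow_one] at this
      calc ((a:ℝ) + 1) ≤ (2:ℝ) ^ a := by
            exact_mod_cast Nat.lt_two_pow_self (n := a)
        _ ≤ ((p:ℝ) ^ δ) ^ a := by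
            apply pow_le_pow_left₀ (by norm_num) h2p
        _ = (p:ℝ) ^ ((a:ℝ) * δ) := by
            rw [← Real.rpow_natCast ((p:ℝ) ^ δ) a, ← Real.rpow_mul (by positivity),
              mul_comm δ (a:ℝ)]
  calc (n.divisors.card : ℝ)
      = ∏ p ∈ n.primeFactors, ((n.factorization p : ℝ) + 1) := hcard
    _ ≤ ∏ p ∈ n.primeFactors,
          (if p < P then B else 1) * (p:ℝ) ^ ((n.factorization p : ℝ) * δ) :=
        Finset.prod_le_prod (fun p _ => by positivity) key
    _ = (∏ p ∈ n.primeFactors, (if p < P then B else 1)) *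
          ∏ p ∈ n.primeFactors, (p:ℝ) ^ ((n.factorization p : ℝ) * δ) :=
        Finset.prod_mul_distrib
    _ ≤ B ^ P * (n:ℝ) ^ δ := by
        rw [← hnδ]
        apply mul_le_mul_of_nonneg_right _ (by positivity)
        calc (∏ p ∈ n.primeFactors, (if p < P then B else 1))
            = ∏ p ∈ n.primeFactors.filter (· < P), B :=
              (Finset.prod_filter _ _).symm
          _ = B ^ (n.primeFactors.filter (· < P)).card := Finset.prod_const B
          _ ≤ B ^ P := by
              apply pow_le_pow_right₀ hB1
              calc (n.primeFactors.filter (· < P)).card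
                  ≤ (Finset.range P).card := by
                    apply Finset.card_le_card
                    intro x hx
                    simp only [Finset.mem_filter] at hx
                    exact Finset.mem_range.mpr hx.2
                _ = P := Finset.card_range P

lemma sum_Icc_inv_le (N : ℕ) :
    ∑ k ∈ Finset.Icc 1 N, (1:ℝ)/(k:ℝ) ≤ 1 + Real.log N := by
  have h1 : ∑ k ∈ Finset.Icc 1 N, (1:ℝ)/(k:ℝ) = (harmonic N : ℝ) := by
    rw [harmonic, ← Finset.Ico_add_one_right_eq_Icc, Finset.sum_Ico_eq_sum_range]
    push_cast
    simp [one_div, add_comm]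
  rw [h1]
  exact_mod_cast harmonic_le_one_add_log N

lemma log_le_rpow' {x β : ℝ} (hx : 1 ≤ x) (hβ : 0 < β) :
    Real.log x ≤ x ^ β / β := by
  have hx0 : 0 < x := lt_of_lt_of_le one_pos hx
  have h1 : Real.log (x ^ β) = β * Real.log x := Real.log_rpow hx0 β
  have h2 : Real.log (x ^ β) ≤ x ^ β - 1 := Real.log_le_sub_one_of_pos (by positivity)
  have h3 : β * Real.log x ≤ x ^ β := by
    have : (0:ℝ) ≤ 1 := one_pos.le
    linarith [h1 ▸ h2]
  rw [le_div_iff₀ hβ, mul_comm]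
  exact h3

lemma inner_shift (N m : ℕ) :
    ∑ n ∈ Finset.Icc 1 N, (if m < n then (1:ℝ)/((n:ℝ) - (m:ℝ)) else 0)
      ≤ 1 + Real.log N := by
  have h1 : ∑ n ∈ Finset.Icc 1 N, (if m < n then (1:ℝ)/((n:ℝ) - (m:ℝ)) else 0)
      = ∑ n ∈ (Finset.Icc 1 N).filter (fun n => m < n), (1:ℝ)/((n:ℝ) - (m:ℝ)) :=
    (Finset.sum_filter _ _).symm
  have h2 : ∑ n ∈ (Finset.Icc 1 N).filter (fun n => m < n), (1:ℝ)/((n:ℝ) - (m:ℝ))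
      = ∑ k ∈ Finset.Icc 1 (N - m), (1:ℝ)/(k:ℝ) := by
    apply Finset.sum_nbij' (fun n => n - m) (fun k => k + m)
    · intro n hn
      simp only [Finset.mem_filter, Finset.mem_Icc] at hn ⊢
      omega
    · intro k hk
      simp only [Finset.mem_filter, Finset.mem_Icc] at hk ⊢
      omega
    · intro n hn
      simp only [Finset.mem_filter, Finset.mem_Icc] at hn
      omega
    · intro k hk
      omega
    · intro n hn
      simp only [Finset.mem_filter, Finset.mem_Icc] at hn
      rw [Nat.cast_sub (le_of_lt hn.2)]
  rw [h1, h2]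
  calc ∑ k ∈ Finset.Icc 1 (N - m), (1:ℝ)/(k:ℝ)
      ≤ ∑ k ∈ Finset.Icc 1 N, (1:ℝ)/(k:ℝ) := by
        apply Finset.sum_le_sum_of_subset_of_nonneg
        · exact Finset.Icc_subset_Icc_right (Nat.sub_le N m)
        · intro k _ _; positivity
    _ ≤ 1 + Real.log N := sum_Icc_inv_le N

lemma denom_lower {a b : ℝ} (ha : 1 ≤ a) (hab : a < b) :
    a * (b - a) / 2 ≤ (a*b) ^ ((3:ℝ)/4) * (Real.sqrt b - Real.sqrt a) := by
  have ha0 : (0:ℝ) < a := lt_of_lt_of_le one_pos ha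
  have hb0 : (0:ℝ) < b := ha0.trans hab
  have hsb : 0 < Real.sqrt b := Real.sqrt_pos.mpr hb0
  have hsa : 0 ≤ Real.sqrt a := Real.sqrt_nonneg a
  have hdiffpos : 0 < Real.sqrt b - Real.sqrt a :=
    sub_pos.mpr (Real.sqrt_lt_sqrt ha0.le hab)
  have hprod : (Real.sqrt b - Real.sqrt a) * (Real.sqrt b + Real.sqrt a) = b - a := by
    linear_combination (Real.sq_sqrt hb0.le) - (Real.sq_sqrt ha0.le)
  have hlow : (b - a) / (2 * Real.sqrt b) ≤ Real.sqrt b - Real.sqrt a := by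
    rw [div_le_iff₀ (by positivity)]
    have h2 : Real.sqrt b + Real.sqrt a ≤ 2 * Real.sqrt b := by
      have h3 : Real.sqrt a ≤ Real.sqrt b := Real.sqrt_le_sqrt hab.le
      linarith
    calc b - a = (Real.sqrt b - Real.sqrt a) * (Real.sqrt b + Real.sqrt a) := hprod.symm
      _ ≤ (Real.sqrt b - Real.sqrt a) * (2 * Real.sqrt b) :=
          mul_le_mul_of_nonneg_left h2 hdiffpos.le
  have hmul : (a*b)^((3:ℝ)/4) = a^((3:ℝ)/4) * b^((3:ℝ)/4) := Real.mul_rpow ha0.le hb0.le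
  have hb34 : b^((3:ℝ)/4) = b^((1:ℝ)/4) * Real.sqrt b := by
    rw [Real.sqrt_eq_rpow, ← Real.rpow_add hb0]; norm_num
  have haa : a^((3:ℝ)/4) * a^((1:ℝ)/4) = a := by
    rw [← Real.rpow_add ha0]; norm_num
  have hab14 : a^((1:ℝ)/4) ≤ b^((1:ℝ)/4) := Real.rpow_le_rpow ha0.le hab.le (by norm_num)
  calc a * (b - a) / 2
      ≤ (a^((3:ℝ)/4) * b^((1:ℝ)/4)) * ((b - a)/2) := by
        have h4 : a ≤ a^((3:ℝ)/4) * b^((1:ℝ)/4) := by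
          calc a = a^((3:ℝ)/4) * a^((1:ℝ)/4) := haa.symm
            _ ≤ a^((3:ℝ)/4) * b^((1:ℝ)/4) :=
                mul_le_mul_of_nonneg_left hab14 (by positivity)
        have hba : (0:ℝ) ≤ (b - a)/2 := by linarith
        calc a * (b - a) / 2 = a * ((b - a)/2) := by ring
          _ ≤ (a^((3:ℝ)/4) * b^((1:ℝ)/4)) * ((b - a)/2) :=
              mul_le_mul_of_nonneg_right h4 hba
    _ = (a^((3:ℝ)/4) * b^((3:ℝ)/4)) * ((b - a)/(2 * Real.sqrt b)) := by
        rw [hb34]; field_simp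
    _ ≤ (a^((3:ℝ)/4) * b^((3:ℝ)/4)) * (Real.sqrt b - Real.sqrt a) :=
        mul_le_mul_of_nonneg_left hlow (by positivity)
    _ = (a*b)^((3:ℝ)/4) * (Real.sqrt b - Real.sqrt a) := by rw [hmul]

theorem offdiagonal_sum_bound : ∀ ε > (0:ℝ), ∃ C > (0:ℝ),
    ∀ y T : ℝ, 2 ≤ y → 2 ≤ T → y < T →
    ∑ n ∈ Finset.Icc 1 ⌊T⌋₊, ∑ m ∈ Finset.Icc 1 ⌊T⌋₊,
      (if y < (m:ℝ) ∧ m < n then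
        (n.divisors.card : ℝ) * (m.divisors.card : ℝ) /
          (((m:ℝ) * (n:ℝ)) ^ ((3:ℝ)/4) * (Real.sqrt n - Real.sqrt m))
      else 0) ≤ C * T ^ ε := by
  intro ε hε
  have hδ : (0:ℝ) < ε/4 := by linarith
  obtain ⟨C₀, hC₀1, hC₀⟩ := divisor_rpow_bound (ε/4) hδ
  have hC₀0 : (0:ℝ) < C₀ := lt_of_lt_of_le one_pos hC₀1
  refine ⟨2 * C₀^2 * (1 + 1/(ε/4))^2, by positivity, ?_⟩
  intro y T hy hT hyT
  set N := ⌊T⌋₊ with hNdef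
  have hT0 : (0:ℝ) < T := by linarith
  have hT1 : (1:ℝ) ≤ T := by linarith
  have hNT : (N:ℝ) ≤ T := Nat.floor_le hT0.le
  have hN1 : 1 ≤ N := Nat.le_floor (by exact_mod_cast hT1)
  set A := 2 * C₀^2 * T^(ε/2) with hAdef
  have hA0 : (0:ℝ) < A := by rw [hAdef]; positivity
  have h44 : T^(ε/4) * T^(ε/4) = T^(ε/2) := by
    rw [← Real.rpow_add hT0]; congr 1; ring
  have hTT : T^(ε/2) * T^(ε/2) = T^ε := by
    rw [← Real.rpow_add hT0]; congr 1; ring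
  -- per-term bound
  have hterm : ∀ n ∈ Finset.Icc 1 N, ∀ m ∈ Finset.Icc 1 N,
      (if y < (m:ℝ) ∧ m < n then
        (n.divisors.card : ℝ) * (m.divisors.card : ℝ) /
          (((m:ℝ) * (n:ℝ)) ^ ((3:ℝ)/4) * (Real.sqrt n - Real.sqrt m))
      else 0) ≤ (A/(m:ℝ)) * (if m < n then (1:ℝ)/((n:ℝ) - (m:ℝ)) else 0) := by
    intro n hn m hm
    simp only [Finset.mem_Icc] at hn hm
    by_cases hmn : m < n
    · rw [if_pos hmn]
      have ha1 : (1:ℝ) ≤ (m:ℝ) := by exact_mod_cast hm.1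
      have habR : (m:ℝ) < (n:ℝ) := by exact_mod_cast hmn
      have hbT : (n:ℝ) ≤ T := le_trans (by exact_mod_cast hn.2) hNT
      have haT : (m:ℝ) ≤ T := le_trans (by exact_mod_cast hm.2) hNT
      have hba : (0:ℝ) < (n:ℝ) - (m:ℝ) := by linarith
      have hm0 : (0:ℝ) < (m:ℝ) := by linarith
      by_cases hcond : y < (m:ℝ) ∧ m < n
      · rw [if_pos hcond]
        have hkey := denom_lower ha1 habR
        have hdn : (n.divisors.card : ℝ) ≤ C₀ * (n:ℝ)^(ε/4) :=
          hC₀ n (by omega)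
        have hdm : (m.divisors.card : ℝ) ≤ C₀ * (m:ℝ)^(ε/4) :=
          hC₀ m (by omega)
        have hnum : (n.divisors.card : ℝ) * (m.divisors.card : ℝ) ≤ C₀^2 * T^(ε/2) := by
          calc (n.divisors.card : ℝ) * (m.divisors.card : ℝ)
              ≤ (C₀ * (n:ℝ)^(ε/4)) * (C₀ * (m:ℝ)^(ε/4)) := by
                apply mul_le_mul hdn hdm (Nat.cast_nonneg _) (by positivity)
            _ ≤ (C₀ * T^(ε/4)) * (C₀ * T^(ε/4)) := by
                apply mul_le_mul _ _ (by positivity) (by positivity)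
                · exact mul_le_mul_of_nonneg_left
                    (Real.rpow_le_rpow (by positivity) hbT hδ.le) hC₀0.le
                · exact mul_le_mul_of_nonneg_left
                    (Real.rpow_le_rpow (by positivity) haT hδ.le) hC₀0.le
            _ = C₀^2 * T^(ε/2) := by rw [← h44]; ring
        have hden_pos : (0:ℝ) < (m:ℝ) * ((n:ℝ) - (m:ℝ)) / 2 := by positivity
        calc (n.divisors.card : ℝ) * (m.divisors.card : ℝ) /
              (((m:ℝ) * (n:ℝ)) ^ ((3:ℝ)/4) * (Real.sqrt n - Real.sqrt m))
            ≤ (C₀^2 * T^(ε/2)) / ((m:ℝ) * ((n:ℝ) - (m:ℝ)) / 2) :=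
              div_le_div₀ (by positivity) hnum hden_pos hkey
          _ = (A/(m:ℝ)) * ((1:ℝ)/((n:ℝ) - (m:ℝ))) := by
              rw [hAdef]; field_simp
      · rw [if_neg hcond]
        positivity
    · have hcond : ¬(y < (m:ℝ) ∧ m < n) := fun h => hmn h.2
      rw [if_neg hcond, if_neg hmn, mul_zero]
  -- sum the bound
  have hL0 : (0:ℝ) ≤ 1 + Real.log N := by
    have : (0:ℝ) ≤ Real.log N := Real.log_nonneg (by exact_mod_cast hN1)
    linarith
  have hsum : ∑ n ∈ Finset.Icc 1 N, ∑ m ∈ Finset.Icc 1 N,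
      (if y < (m:ℝ) ∧ m < n then
        (n.divisors.card : ℝ) * (m.divisors.card : ℝ) /
          (((m:ℝ) * (n:ℝ)) ^ ((3:ℝ)/4) * (Real.sqrt n - Real.sqrt m))
      else 0) ≤ A * (1 + Real.log N) * (1 + Real.log N) := by
    calc ∑ n ∈ Finset.Icc 1 N, ∑ m ∈ Finset.Icc 1 N,
        (if y < (m:ℝ) ∧ m < n then
          (n.divisors.card : ℝ) * (m.divisors.card : ℝ) /
            (((m:ℝ) * (n:ℝ)) ^ ((3:ℝ)/4) * (Real.sqrt n - Real.sqrt m))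
        else 0)
        ≤ ∑ n ∈ Finset.Icc 1 N, ∑ m ∈ Finset.Icc 1 N,
            (A/(m:ℝ)) * (if m < n then (1:ℝ)/((n:ℝ) - (m:ℝ)) else 0) :=
          Finset.sum_le_sum (fun n hn => Finset.sum_le_sum (hterm n hn))
      _ = ∑ m ∈ Finset.Icc 1 N, ∑ n ∈ Finset.Icc 1 N,
            (A/(m:ℝ)) * (if m < n then (1:ℝ)/((n:ℝ) - (m:ℝ)) else 0) :=
          Finset.sum_comm
      _ = ∑ m ∈ Finset.Icc 1 N, (A/(m:ℝ)) * ∑ n ∈ Finset.Icc 1 N,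
            (if m < n then (1:ℝ)/((n:ℝ) - (m:ℝ)) else 0) := by
          apply Finset.sum_congr rfl
          intro m _
          rw [Finset.mul_sum]
      _ ≤ ∑ m ∈ Finset.Icc 1 N, (A/(m:ℝ)) * (1 + Real.log N) := by
          apply Finset.sum_le_sum
          intro m _
          exact mul_le_mul_of_nonneg_left (inner_shift N m) (by positivity)
      _ = (A * (1 + Real.log N)) * ∑ m ∈ Finset.Icc 1 N, (1:ℝ)/(m:ℝ) := by
          rw [Finset.mul_sum]
          apply Finset.sum_congr rfl
          intro m _
          ring
      _ ≤ (A * (1 + Real.log N)) * (1 + Real.log N) := by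
          apply mul_le_mul_of_nonneg_left (sum_Icc_inv_le N) (by positivity)
      _ = A * (1 + Real.log N) * (1 + Real.log N) := by ring
  -- final log/rpow estimate
  have hlogN : 1 + Real.log N ≤ (1 + 1/(ε/4)) * T^(ε/4) := by
    have h1 : Real.log N ≤ Real.log T := by
      apply Real.log_le_log (by exact_mod_cast Nat.lt_of_lt_of_le Nat.zero_lt_one hN1) hNT
    have h2 : Real.log T ≤ T^(ε/4) / (ε/4) := log_le_rpow' hT1 hδ
    have h3 : (1:ℝ) ≤ T^(ε/4) := by
      calc (1:ℝ) = (1:ℝ)^(ε/4) := (Real.one_rpow _).symm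
        _ ≤ T^(ε/4) := Real.rpow_le_rpow (by norm_num) hT1 hδ.le
    calc 1 + Real.log N ≤ T^(ε/4) + T^(ε/4)/(ε/4) := by linarith
      _ = (1 + 1/(ε/4)) * T^(ε/4) := by field_simp
  have hRnn : (0:ℝ) ≤ (1 + 1/(ε/4)) * T^(ε/4) := by positivity
  calc ∑ n ∈ Finset.Icc 1 N, ∑ m ∈ Finset.Icc 1 N,
      (if y < (m:ℝ) ∧ m < n then
        (n.divisors.card : ℝ) * (m.divisors.card : ℝ) /
          (((m:ℝ) * (n:ℝ)) ^ ((3:ℝ)/4) * (Real.sqrt n - Real.sqrt m))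
      else 0)
      ≤ A * (1 + Real.log N) * (1 + Real.log N) := hsum
    _ ≤ A * ((1 + 1/(ε/4)) * T^(ε/4)) * ((1 + 1/(ε/4)) * T^(ε/4)) := by
        apply mul_le_mul _ hlogN hL0 (by positivity)
        exact mul_le_mul_of_nonneg_left hlogN hA0.le
    _ = (2 * C₀^2 * (1 + 1/(ε/4))^2) * (T^(ε/2) * (T^(ε/4) * T^(ε/4))) := by
        rw [hAdef]; ring
    _ = (2 * C₀^2 * (1 + 1/(ε/4))^2) * (T^(ε/2) * T^(ε/2)) := by rw [h44]
    _ = (2 * C₀^2 * (1 + 1/(ε/4))^2) * T^ε := by rw [hTT]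
end
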